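/- arXiv:0912.3446 — 5 statements merged into one kernel-verified Lean document; each statement's English description precedes it below -/
import Mathlib

section
/- The permutahedron Π_n, defined as the convex hull of all points obtained by permuting the coordinates of (1,2,...,n) ∈ ℝ^n, equals the set of points x ∈ ℝ^n satisfying ∑_{v=1}^n x_v = n(n+1)/2 and ∑_{v∈S} x_v ≥ |S|(|S|+1)/2 for every nonempty proper subset S of {1,...,n}. -/
lemma fin_le_strictMono {k : ℕ} (g : Fin k → ℕ) (hg : StrictMono g) : ∀ j : Fin k, (j : ℕ) ≤ g j := by
  have key : ∀ m : ℕ, ∀ j : Fin k, (j : ℕ) = m → m ≤ g j := by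
    intro m
    induction m with
    | zero => intro j _; exact Nat.zero_le _
    | succ m ih =>
      intro j hj
      have hjk := j.isLt
      have hmk : m < k := by omega
      have h1 : g ⟨m, hmk⟩ < g j := hg (by simp [Fin.lt_def, hj])
      have h2 := ih ⟨m, hmk⟩ rfl
      omega
  intro j; exact key _ j rfl

lemma gauss_real (k : ℕ) : ∑ j ∈ Finset.range k, ((j : ℝ) + 1) = (k : ℝ) * (k + 1) / 2 := by
  induction k with
  | zero => simp
  | succ m ih =>
    rw [Finset.sum_range_succ, ih]
    push_cast
    ring

lemma sum_distinct_ge (n : ℕ) (T : Finset (Fin n)) :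
    (T.card : ℝ) * (T.card + 1) / 2 ≤ ∑ i ∈ T, ((i : ℕ) + 1 : ℝ) := by
  set k := T.card with hk
  have e := T.orderEmbOfFin hk.symm
  have himg : Finset.image (T.orderEmbOfFin hk.symm) Finset.univ = T := by
    ext i
    simp only [Finset.mem_image, Finset.mem_univ, true_and]
    constructor
    · rintro ⟨j, rfl⟩; exact Finset.orderEmbOfFin_mem T hk.symm j
    · intro hi
      have : i ∈ Set.range (T.orderEmbOfFin hk.symm) := by
        rw [Finset.range_orderEmbOfFin]; exact hi
      exact this
  rw [← himg, Finset.sum_image (fun a _ b _ h => (T.orderEmbOfFin hk.symm).injective h)]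
  have hmono : StrictMono (fun j : Fin k => ((T.orderEmbOfFin hk.symm j : Fin n) : ℕ)) :=
    fun a b hab => (T.orderEmbOfFin hk.symm).strictMono hab
  calc (k : ℝ) * (k + 1) / 2 = ∑ j ∈ Finset.range k, ((j:ℝ) + 1) := (gauss_real k).symm
    _ = ∑ j : Fin k, ((j : ℕ) + 1 : ℝ) := (Fin.sum_univ_eq_sum_range (fun m => (m:ℝ)+1) k).symm
    _ ≤ ∑ j : Fin k, (((T.orderEmbOfFin hk.symm j : Fin n) : ℕ) + 1 : ℝ) := by
        apply Finset.sum_le_sum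
        intro j _
        have h := fin_le_strictMono _ hmono j
        have h3 : ((j : ℕ) : ℝ) ≤ (((T.orderEmbOfFin hk.symm j : Fin n) : ℕ) : ℝ) :=
          Nat.cast_le.mpr h
        linarith

lemma abel_sum (d E : ℕ → ℝ) (n : ℕ) :
    ∑ j ∈ Finset.range n, d j * (E (j+1) - E j)
      = d n * E n - d 0 * E 0 - ∑ j ∈ Finset.range n, (d (j+1) - d j) * E (j+1) := by
  induction n with
  | zero => simp
  | succ m ih =>
    rw [Finset.sum_range_succ, Finset.sum_range_succ, ih]
    ring


def permutahedron (n : ℕ) : Set (Fin n → ℝ) :=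
  convexHull ℝ {x : Fin n → ℝ | ∃ σ : Equiv.Perm (Fin n), ∀ v, x v = ((σ⁻¹ v : Fin n) : ℕ) + 1}

theorem permutahedron_eq_inequalities (n : ℕ) :
    permutahedron n =
      {x : Fin n → ℝ |
        ∑ v, x v = (n : ℝ) * (n + 1) / 2 ∧
        ∀ S : Finset (Fin n), S.Nonempty → S ≠ Finset.univ →
          ∑ v ∈ S, x v ≥ (S.card : ℝ) * (S.card + 1) / 2} := by
  set A : Set (Fin n → ℝ) := {x : Fin n → ℝ |
        ∑ v, x v = (n : ℝ) * (n + 1) / 2 ∧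
        ∀ S : Finset (Fin n), S.Nonempty → S ≠ Finset.univ →
          ∑ v ∈ S, x v ≥ (S.card : ℝ) * (S.card + 1) / 2} with hA
  have hconv : Convex ℝ A := by
    intro p hp q hq a b ha hb hab
    obtain ⟨hp1, hp2⟩ := hp
    obtain ⟨hq1, hq2⟩ := hq
    constructor
    · have : ∑ v, (a • p + b • q) v = a * ∑ v, p v + b * ∑ v, q v := by
        simp only [Pi.add_apply, Pi.smul_apply, smul_eq_mul]
        rw [Finset.sum_add_distrib, ← Finset.mul_sum, ← Finset.mul_sum]
      rw [this, hp1, hq1, ← add_mul, hab, one_mul]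
    · intro S hS hSne
      have hps := hp2 S hS hSne
      have hqs := hq2 S hS hSne
      have : ∑ v ∈ S, (a • p + b • q) v = a * ∑ v ∈ S, p v + b * ∑ v ∈ S, q v := by
        simp only [Pi.add_apply, Pi.smul_apply, smul_eq_mul]
        rw [Finset.sum_add_distrib, ← Finset.mul_sum, ← Finset.mul_sum]
      rw [this]
      have h1 : a * ((S.card : ℝ) * (S.card + 1) / 2) ≤ a * ∑ v ∈ S, p v :=
        mul_le_mul_of_nonneg_left hps ha
      have h2 : b * ((S.card : ℝ) * (S.card + 1) / 2) ≤ b * ∑ v ∈ S, q v :=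
        mul_le_mul_of_nonneg_left hqs hb
      have h3 : a * ((S.card : ℝ) * (S.card + 1) / 2) + b * ((S.card : ℝ) * (S.card + 1) / 2)
          = (S.card : ℝ) * (S.card + 1) / 2 := by rw [← add_mul, hab, one_mul]
      linarith
  have hgen : {x : Fin n → ℝ | ∃ σ : Equiv.Perm (Fin n), ∀ v, x v = ((σ⁻¹ v : Fin n) : ℕ) + 1}
      ⊆ A := by
    rintro x ⟨σ, hσ⟩
    constructor
    · have h1 : ∑ v, x v = ∑ v : Fin n, (((σ⁻¹ v : Fin n) : ℕ) + 1 : ℝ) :=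
        Finset.sum_congr rfl fun v _ => hσ v
      rw [h1]
      rw [show (∑ v : Fin n, (((σ⁻¹ v : Fin n) : ℕ) + 1 : ℝ))
            = ∑ v : Fin n, (((v : Fin n) : ℕ) + 1 : ℝ) from
          Equiv.sum_comp (σ⁻¹ : Equiv.Perm (Fin n)) (fun v : Fin n => ((v : ℕ) + 1 : ℝ)),
        Fin.sum_univ_eq_sum_range (fun m => ((m : ℝ) + 1)) n, gauss_real]
    · intro S hS hSne
      have h1 : ∑ v ∈ S, x v = ∑ v ∈ S, (((σ⁻¹ v : Fin n) : ℕ) + 1 : ℝ) :=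
        Finset.sum_congr rfl fun v _ => hσ v
      have hinj : Function.Injective (σ⁻¹ : Equiv.Perm (Fin n)) := Equiv.injective _
      have h3 := sum_distinct_ge n (S.image (σ⁻¹ : Equiv.Perm (Fin n)))
      rw [Finset.card_image_of_injective S hinj] at h3
      rw [h1, ← Finset.sum_image (f := fun i : Fin n => ((i : ℕ) + 1 : ℝ))
        (fun a _ b _ h => hinj h)]
      exact h3
  apply Set.Subset.antisymm
  · exact convexHull_min hgen hconv
  · intro x hx
    obtain ⟨hx1, hx2⟩ := hx
    rcases Nat.eq_zero_or_pos n with hn | hn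
    · subst hn
      rw [permutahedron]
      exact subset_convexHull ℝ _ ⟨1, fun v => v.elim0⟩
    by_contra hxK
    rw [permutahedron] at hxK
    set s : Set (Fin n → ℝ) :=
      {y : Fin n → ℝ | ∃ σ : Equiv.Perm (Fin n), ∀ v, y v = ((σ⁻¹ v : Fin n) : ℕ) + 1} with hs
    have hsfin : s.Finite := by
      have hsub : s ⊆ Set.range (fun σ : Equiv.Perm (Fin n) =>
          (fun v => (((σ⁻¹ v : Fin n) : ℕ) + 1 : ℝ))) := by
        rintro y ⟨σ, hσ⟩
        exact ⟨σ, (funext fun v => (hσ v).symm)⟩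
      exact (Set.finite_range _).subset hsub
    have hclosed : IsClosed (convexHull ℝ s) := hsfin.isClosed_convexHull ℝ
    obtain ⟨f, u, hfs, hfx⟩ :=
      geometric_hahn_banach_closed_point (convex_convexHull ℝ s) hclosed hxK
    set c : Fin n → ℝ := fun v => f (fun j => if v = j then (1:ℝ) else 0) with hc
    have hf_repr : ∀ y : Fin n → ℝ, f y = ∑ v, y v * c v := by
      intro y
      conv_lhs => rw [pi_eq_sum_univ y]
      rw [map_sum]
      refine Finset.sum_congr rfl fun v _ => ?_
      rw [map_smul]
      simp [hc, smul_eq_mul]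
    set τ : Equiv.Perm (Fin n) := Tuple.sort c with hτ
    have hτmono : Monotone (c ∘ τ) := Tuple.monotone_sort c
    have hpad : ∀ j : ℕ, min j (n-1) < n := fun j => by omega
    set pad : ℕ → Fin n := fun j => ⟨min j (n-1), hpad j⟩ with hpaddef
    have pad_coe : ∀ j : Fin n, pad (j : ℕ) = j := by
      intro j
      have := j.isLt
      apply Fin.ext
      simp only [hpaddef]
      omega
    set d : ℕ → ℝ := fun j => c (τ (pad j)) with hd
    set xs : ℕ → ℝ := fun j => x (τ (pad j)) with hxs
    set E : ℕ → ℝ := fun k => ∑ j ∈ Finset.range k, (xs j - ((j : ℝ) + 1)) with hE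
    have hE0 : E 0 = 0 := by simp [hE]
    have hEn : E n = 0 := by
      have h1 : ∑ j ∈ Finset.range n, xs j = ∑ v, x v := by
        rw [← Fin.sum_univ_eq_sum_range (fun m => xs m) n]
        rw [show (∑ j : Fin n, xs (j : ℕ)) = ∑ j : Fin n, x (τ j) from
          Finset.sum_congr rfl fun j _ => by simp [hxs, pad_coe j]]
        exact Equiv.sum_comp τ x
      have h2 : E n = ∑ j ∈ Finset.range n, xs j - ∑ j ∈ Finset.range n, ((j : ℝ) + 1) := by
        simp [hE, Finset.sum_sub_distrib]
      rw [h2, h1, gauss_real, hx1]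
      ring
    have hkey : ∀ k : ℕ, 1 ≤ k → k ≤ n → 0 ≤ E k := by
      intro k hk1 hkn
      rcases eq_or_lt_of_le hkn with hkeq | hklt
      · subst hkeq; rw [hEn]
      · set emb : Fin k ↪ Fin n :=
          ⟨fun j => τ (Fin.castLE hkn j), fun a b h =>
            Fin.castLE_injective hkn (τ.injective h)⟩ with hemb
        set S : Finset (Fin n) := Finset.univ.map emb with hS
        have hcard : S.card = k := by simp [hS]
        have hne : S.Nonempty := by rw [← Finset.card_pos, hcard]; omega
        have hnuniv : S ≠ Finset.univ := by
          intro h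
          have h1 : (Finset.univ : Finset (Fin n)).card = n := by simp
          rw [h, h1] at hcard
          omega
        have hineq := hx2 S hne hnuniv
        rw [hcard] at hineq
        have hsum : ∑ v ∈ S, x v = ∑ j ∈ Finset.range k, xs j := by
          rw [hS, Finset.sum_map, ← Fin.sum_univ_eq_sum_range (fun m => xs m) k]
          refine Finset.sum_congr rfl fun j _ => ?_
          have hjlt := j.isLt
          have hpj : pad (j : ℕ) = Fin.castLE hkn j := by
            apply Fin.ext
            simp only [hpaddef, Fin.coe_castLE]
            omega
          simp [hxs, hpj, hemb]; rfl
        have hEk : E k = ∑ v ∈ S, x v - (k : ℝ) * (k + 1) / 2 := by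
          simp only [hE]
          rw [Finset.sum_sub_distrib, hsum, gauss_real]
        rw [hEk]
        linarith
    have hdm : ∀ j, d j ≤ d (j + 1) := by
      intro j
      apply hτmono
      show pad j ≤ pad (j + 1)
      simp only [hpaddef, Fin.mk_le_mk]
      omega
    have hfx_eq : f x = ∑ j ∈ Finset.range n, d j * xs j := by
      rw [hf_repr x, ← Equiv.sum_comp τ (fun v => x v * c v),
        ← Fin.sum_univ_eq_sum_range (fun m => d m * xs m) n]
      refine Finset.sum_congr rfl fun j _ => ?_
      simp only [hd, hxs, pad_coe j]
      ring
    set p : Fin n → ℝ := fun v => (((τ⁻¹ v : Fin n) : ℕ) + 1 : ℝ) with hp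
    have hpmem : p ∈ convexHull ℝ s := subset_convexHull ℝ s ⟨τ, fun v => rfl⟩
    have hfp_eq : f p = ∑ j ∈ Finset.range n, d j * ((j : ℝ) + 1) := by
      rw [hf_repr p, ← Equiv.sum_comp τ (fun v => p v * c v),
        ← Fin.sum_univ_eq_sum_range (fun m => d m * ((m : ℝ) + 1)) n]
      refine Finset.sum_congr rfl fun j _ => ?_
      have hτj : τ⁻¹ (τ j) = j := Equiv.symm_apply_apply τ j
      simp only [hp, hd, hτj, pad_coe j]
      ring
    have hdiff : f x - f p = ∑ j ∈ Finset.range n, d j * (E (j + 1) - E j) := by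
      rw [hfx_eq, hfp_eq, ← Finset.sum_sub_distrib]
      refine Finset.sum_congr rfl fun j _ => ?_
      have hEj : E (j + 1) - E j = xs j - ((j : ℝ) + 1) := by
        simp only [hE, Finset.sum_range_succ]
        ring
      rw [hEj]
      ring
    rw [abel_sum d E n] at hdiff
    have hsum_nonneg : 0 ≤ ∑ j ∈ Finset.range n, (d (j + 1) - d j) * E (j + 1) := by
      apply Finset.sum_nonneg
      intro j hj
      rw [Finset.mem_range] at hj
      exact mul_nonneg (by linarith [hdm j]) (hkey (j + 1) (by omega) (by omega))
    rw [hEn, hE0] at hdiff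
    have hfle : f x ≤ f p := by
      have : f x - f p = - ∑ j ∈ Finset.range n, (d (j + 1) - d j) * E (j + 1) := by
        rw [hdiff]; ring
      linarith
    have hpu := hfs p hpmem
    linarith
end

section
/- Every polytope Q ⊆ ℝ^d whose image under a linear map p : ℝ^d → ℝ^n equals the permutahedron Π_n has at least log₂(n!) facets. -/
/-- `F` is a face of `Q`: either `Q` itself or the set of maximizers over `Q`
of some linear functional. -/
def IsFaceOf {d : ℕ} (F Q : Set (Fin d → ℝ)) : Prop :=
  F = Q ∨ ∃ ℓ : (Fin d → ℝ) →ₗ[ℝ] ℝ, F = {x ∈ Q | ∀ y ∈ Q, ℓ y ≤ ℓ x}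

/-- `F` is a facet of `Q`: a nonempty proper face of affine dimension one less. -/
def IsFacetOf {d : ℕ} (F Q : Set (Fin d → ℝ)) : Prop :=
  IsFaceOf F Q ∧ F.Nonempty ∧ F ≠ Q ∧
    Module.finrank ℝ (vectorSpan ℝ F) + 1 = Module.finrank ℝ (vectorSpan ℝ Q)

section Aux

theorem vectorSpan_convexHull' {d : ℕ} (s : Set (Fin d → ℝ)) :
    vectorSpan ℝ (convexHull ℝ s) = vectorSpan ℝ s := by
  rw [← direction_affineSpan, affineSpan_convexHull, direction_affineSpan]


open Finset

variable {d : ℕ}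

open Classical in
/-- The set of maximizers of a linear functional over a finite set. -/
noncomputable def argmaxF (V : Finset (Fin d → ℝ)) (c : (Fin d → ℝ) →ₗ[ℝ] ℝ) :
    Finset (Fin d → ℝ) :=
  V.filter (fun v => ∀ w ∈ V, c w ≤ c v)

theorem mem_argmaxF {V : Finset (Fin d → ℝ)} {c : (Fin d → ℝ) →ₗ[ℝ] ℝ} {v : Fin d → ℝ} :
    v ∈ argmaxF V c ↔ v ∈ V ∧ ∀ w ∈ V, c w ≤ c v := by
  simp [argmaxF]

theorem argmaxF_subset (V : Finset (Fin d → ℝ)) (c : (Fin d → ℝ) →ₗ[ℝ] ℝ) :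
    argmaxF V c ⊆ V := fun _ h => (mem_argmaxF.1 h).1

theorem argmaxF_nonempty {V : Finset (Fin d → ℝ)} (hV : V.Nonempty) (c : (Fin d → ℝ) →ₗ[ℝ] ℝ) :
    (argmaxF V c).Nonempty := by
  obtain ⟨b, hb, hmax⟩ := V.exists_max_image c hV
  exact ⟨b, mem_argmaxF.2 ⟨hb, hmax⟩⟩

theorem argmaxF_const {V : Finset (Fin d → ℝ)} {c : (Fin d → ℝ) →ₗ[ℝ] ℝ}
    {v w : Fin d → ℝ} (hv : v ∈ argmaxF V c) (hw : w ∈ argmaxF V c) : c v = c w :=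
  le_antisymm ((mem_argmaxF.1 hw).2 v (mem_argmaxF.1 hv).1)
    ((mem_argmaxF.1 hv).2 w (mem_argmaxF.1 hw).1)

/-- `c` is constant on the convex hull of its argmax set. -/
theorem convexHull_argmaxF_subset_level {V : Finset (Fin d → ℝ)} {c : (Fin d → ℝ) →ₗ[ℝ] ℝ}
    {v : Fin d → ℝ} (hv : v ∈ argmaxF V c) :
    (convexHull ℝ (↑(argmaxF V c) : Set (Fin d → ℝ))) ⊆ {z | c z = c v} := by
  apply convexHull_min
  · intro w hw
    exact argmaxF_const (by exact_mod_cast hw) hv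
  · exact convex_hyperplane (IsLinearMap.mk c.map_add c.map_smul) _

/-- Fact F1: the face of `conv V` given by maximizing `c` is the hull of the argmax. -/
theorem face_eq (V : Finset (Fin d → ℝ)) (hV : V.Nonempty) (c : (Fin d → ℝ) →ₗ[ℝ] ℝ) :
    {x ∈ convexHull ℝ (V : Set (Fin d → ℝ)) |
        ∀ y ∈ convexHull ℝ (V : Set (Fin d → ℝ)), c y ≤ c x}
      = convexHull ℝ (↑(argmaxF V c) : Set (Fin d → ℝ)) := by
  obtain ⟨v₀, hv₀⟩ := argmaxF_nonempty hV c
  apply Set.Subset.antisymm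
  · rintro x ⟨hxQ, hxmax⟩
    -- write x as a center of mass
    rw [Finset.convexHull_eq] at hxQ
    obtain ⟨w, hw0, hw1, hx⟩ := hxQ
    -- c x = c v₀
    have hxv₀ : c x = c v₀ := by
      refine le_antisymm ?_ (hxmax v₀ (subset_convexHull ℝ _ (by exact_mod_cast (argmaxF_subset V c hv₀))))
      -- c x ≤ c v₀ since x is a convex combination
      have hcx : c x = ∑ y ∈ V, w y * c y := by
        rw [← hx, Finset.centerMass, map_smul, map_sum]
        simp [mul_comm, hw1]
      rw [hcx]
      calc ∑ y ∈ V, w y * c y ≤ ∑ y ∈ V, w y * c v₀ := by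
            apply Finset.sum_le_sum
            intro i hi
            exact mul_le_mul_of_nonneg_left ((mem_argmaxF.1 hv₀).2 i hi) (hw0 i hi)
        _ = c v₀ := by rw [← Finset.sum_mul, hw1, one_mul]
    -- weights vanish off the argmax
    have hzero : ∀ y ∈ V, y ∉ argmaxF V c → w y = 0 := by
      intro y hy hyn
      by_contra hne
      have hwy : 0 < w y := lt_of_le_of_ne (hw0 y hy) (Ne.symm hne)
      have hcy : c y < c v₀ := by
        rcases lt_or_eq_of_le ((mem_argmaxF.1 hv₀).2 y hy) with h | h
        · exact h
        · exact absurd (mem_argmaxF.2 ⟨hy, fun z hz => h ▸ (mem_argmaxF.1 hv₀).2 z hz⟩) hyn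
      have hcx : c x = ∑ z ∈ V, w z * c z := by
        rw [← hx, Finset.centerMass, map_smul, map_sum]
        simp [mul_comm, hw1]
      have hlt : ∑ z ∈ V, w z * c z < ∑ z ∈ V, w z * c v₀ := by
        apply Finset.sum_lt_sum
        · intro i hi
          exact mul_le_mul_of_nonneg_left ((mem_argmaxF.1 hv₀).2 i hi) (hw0 i hi)
        · exact ⟨y, hy, by nlinarith⟩
      rw [← hcx, ← Finset.sum_mul, hw1, one_mul] at hlt
      exact absurd hxv₀ (ne_of_lt hlt)
    -- hence x is a center of mass of the argmax set
    rw [← hx, ← Finset.centerMass_subset (w := w) id (argmaxF_subset V c) hzero]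
    apply Finset.centerMass_id_mem_convexHull
    · intro i hi
      exact hw0 i (argmaxF_subset V c hi)
    · have : ∑ y ∈ argmaxF V c, w y = ∑ y ∈ V, w y := Finset.sum_subset (argmaxF_subset V c) hzero
      rw [this, hw1]; exact one_pos
  · intro x hx
    have hxlvl := convexHull_argmaxF_subset_level hv₀ hx
    refine ⟨convexHull_mono (by exact_mod_cast argmaxF_subset V c) hx, ?_⟩
    intro y hy
    have : c y ≤ c v₀ := by
      have : convexHull ℝ (V : Set (Fin d → ℝ)) ⊆ {z | c z ≤ c v₀} := by
        apply convexHull_min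
        · intro w hw; exact (mem_argmaxF.1 hv₀).2 w (by exact_mod_cast hw)
        · exact convex_halfSpace_le (IsLinearMap.mk c.map_add c.map_smul) _
      exact this hy
    rw [Set.mem_setOf_eq] at hxlvl
    rw [hxlvl]; exact this

/-- Points of `V` in the hull of the argmax set are in the argmax set. -/
theorem mem_argmaxF_of_mem_convexHull {V : Finset (Fin d → ℝ)} {c : (Fin d → ℝ) →ₗ[ℝ] ℝ}
    {v : Fin d → ℝ} (hvV : v ∈ V)
    (hv : v ∈ convexHull ℝ (↑(argmaxF V c) : Set (Fin d → ℝ))) : v ∈ argmaxF V c := by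
  rcases (argmaxF V c).eq_empty_or_nonempty with h | ⟨v₀, hv₀⟩
  · rw [h] at hv; simp at hv
  · have := convexHull_argmaxF_subset_level hv₀ hv
    rw [Set.mem_setOf_eq] at this
    exact mem_argmaxF.2 ⟨hvV, fun w hw => this ▸ (mem_argmaxF.1 hv₀).2 w hw⟩


open Finset

variable {d : ℕ}

theorem linear_eq_on_affineSpan {s : Set (Fin d → ℝ)} {c : (Fin d → ℝ) →ₗ[ℝ] ℝ} {M : ℝ}
    (h : ∀ x ∈ s, c x = M) {x : Fin d → ℝ} (hx : x ∈ affineSpan ℝ s) : c x = M := by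
  have hle : affineSpan ℝ s ≤ (affineSpan ℝ ({M} : Set ℝ)).comap c.toAffineMap := by
    rw [affineSpan_le]
    intro y hy
    show y ∈ (affineSpan ℝ ({M} : Set ℝ)).comap c.toAffineMap
    rw [AffineSubspace.mem_comap]
    simp only [LinearMap.coe_toAffineMap, AffineSubspace.mem_affineSpan_singleton]
    exact h y hy
  have h2 : x ∈ (affineSpan ℝ ({M} : Set ℝ)).comap c.toAffineMap := hle hx
  rw [AffineSubspace.mem_comap] at h2
  simpa only [LinearMap.coe_toAffineMap, AffineSubspace.mem_affineSpan_singleton] using h2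

theorem exists_dual_annihilating {U : Submodule ℝ (Fin d → ℝ)} {u : Fin d → ℝ} (hu : u ∉ U) :
    ∃ φ : (Fin d → ℝ) →ₗ[ℝ] ℝ, (∀ w ∈ U, φ w = 0) ∧ φ u = 1 := by
  have hq : U.mkQ u ≠ 0 := by
    rw [Submodule.mkQ_apply, Ne, Submodule.Quotient.mk_eq_zero]
    exact hu
  have := (Module.forall_dual_apply_eq_zero_iff ℝ (U.mkQ u)).not.2 hq
  push_neg at this
  obtain ⟨ψ, hψ⟩ := this
  refine ⟨((ψ (U.mkQ u))⁻¹ • ψ).comp U.mkQ, ?_, ?_⟩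
  · intro w hw
    simp [Submodule.Quotient.mk_eq_zero U |>.2 hw]
  · simp only [LinearMap.comp_apply, LinearMap.smul_apply, smul_eq_mul, Submodule.mkQ_apply]
    rw [inv_mul_cancel₀ (by simpa using hψ)]

/-- An affine functional vanishing on the affine span of `A` with value 1 at a point outside. -/
theorem exists_affine_separating {A : Set (Fin d → ℝ)} {a w₁ : Fin d → ℝ} (ha : a ∈ A)
    (hw₁ : w₁ ∉ affineSpan ℝ A) :
    ∃ (g : (Fin d → ℝ) →ₗ[ℝ] ℝ) (γ : ℝ), (∀ x ∈ affineSpan ℝ A, g x = γ) ∧ g w₁ = γ + 1 := by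
  have haA : a ∈ affineSpan ℝ A := subset_affineSpan ℝ A ha
  have hu : w₁ - a ∉ vectorSpan ℝ A := by
    rw [← direction_affineSpan]
    intro hmem
    exact hw₁ ((AffineSubspace.vsub_right_mem_direction_iff_mem haA w₁).1 hmem)
  obtain ⟨φ, hφ0, hφ1⟩ := exists_dual_annihilating hu
  refine ⟨φ, φ a, ?_, ?_⟩
  · intro x hx
    have : x - a ∈ vectorSpan ℝ A := by
      rw [← direction_affineSpan]
      exact AffineSubspace.vsub_mem_direction hx haA
    have := hφ0 _ this
    rw [map_sub] at this
    linarith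
  · have : φ (w₁ - a) = 1 := hφ1
    rw [map_sub] at this
    linarith

open Finset
variable {d : ℕ}

theorem lt_max_of_not_argmaxF {V : Finset (Fin d → ℝ)} {c : (Fin d → ℝ) →ₗ[ℝ] ℝ}
    {w v₀ : Fin d → ℝ} (hw : w ∈ V) (hnw : w ∉ argmaxF V c) (hv₀ : v₀ ∈ argmaxF V c) :
    c w < c v₀ := by
  rcases lt_or_eq_of_le ((mem_argmaxF.1 hv₀).2 w hw) with h | h
  · exact h
  · exact absurd (mem_argmaxF.2 ⟨hw, fun z hz => h ▸ (mem_argmaxF.1 hv₀).2 z hz⟩) hnw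

/-- If the argmax set spans the whole dimension, every point of `V` is in the argmax set. -/
theorem mem_argmaxF_of_finrank_eq {V : Finset (Fin d → ℝ)} {c : (Fin d → ℝ) →ₗ[ℝ] ℝ}
    {v : Fin d → ℝ} (hvV : v ∈ V)
    (h : Module.finrank ℝ (vectorSpan ℝ (↑(argmaxF V c) : Set (Fin d → ℝ))) =
      Module.finrank ℝ (vectorSpan ℝ (V : Set (Fin d → ℝ)))) :
    v ∈ argmaxF V c := by
  obtain ⟨v₀, hv₀⟩ := argmaxF_nonempty ⟨v, hvV⟩ c
  have hle : vectorSpan ℝ (↑(argmaxF V c) : Set (Fin d → ℝ)) ≤ vectorSpan ℝ (V : Set (Fin d → ℝ)) :=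
    vectorSpan_mono ℝ (by exact_mod_cast argmaxF_subset V c)
  have hEq : vectorSpan ℝ (↑(argmaxF V c) : Set (Fin d → ℝ)) = vectorSpan ℝ (V : Set (Fin d → ℝ)) :=
    Submodule.eq_of_le_of_finrank_eq hle h
  have hv₀S : v₀ ∈ affineSpan ℝ (↑(argmaxF V c) : Set (Fin d → ℝ)) :=
    subset_affineSpan ℝ _ (by exact_mod_cast hv₀)
  have hv₀V : v₀ ∈ affineSpan ℝ (V : Set (Fin d → ℝ)) :=
    subset_affineSpan ℝ _ (by exact_mod_cast argmaxF_subset V c hv₀)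
  have hvV' : v ∈ affineSpan ℝ (V : Set (Fin d → ℝ)) := subset_affineSpan ℝ _ (by exact_mod_cast hvV)
  have hd : v -ᵥ v₀ ∈ (affineSpan ℝ (V : Set (Fin d → ℝ))).direction :=
    AffineSubspace.vsub_mem_direction hvV' hv₀V
  rw [direction_affineSpan, ← hEq, ← direction_affineSpan] at hd
  have hvS : v ∈ affineSpan ℝ (↑(argmaxF V c) : Set (Fin d → ℝ)) :=
    (AffineSubspace.vsub_right_mem_direction_iff_mem hv₀S v).1 hd
  have hcv : c v = c v₀ :=
    linear_eq_on_affineSpan (fun x hx => argmaxF_const (by exact_mod_cast hx) hv₀) hvS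
  exact mem_argmaxF.2 ⟨hvV, fun w hw => hcv ▸ (mem_argmaxF.1 hv₀).2 w hw⟩

theorem exists_facet_functional_aux (V : Finset (Fin d → ℝ)) {v : Fin d → ℝ} (hvV : v ∈ V)
    (k : ℕ) :
    ∀ c : (Fin d → ℝ) →ₗ[ℝ] ℝ, v ∉ argmaxF V c → (V \ argmaxF V c).card ≤ k →
    ∃ c' : (Fin d → ℝ) →ₗ[ℝ] ℝ, argmaxF V c ⊆ argmaxF V c' ∧ v ∉ argmaxF V c' ∧
      Module.finrank ℝ (vectorSpan ℝ (↑(argmaxF V c') : Set (Fin d → ℝ))) + 1 =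
        Module.finrank ℝ (vectorSpan ℝ (V : Set (Fin d → ℝ))) := by
  induction k with
  | zero =>
    intro c hvn hcard
    exfalso
    have : v ∈ V \ argmaxF V c := Finset.mem_sdiff.2 ⟨hvV, hvn⟩
    have := Finset.card_pos.2 ⟨v, this⟩
    omega
  | succ k ih =>
    intro c hvn hcard
    obtain ⟨v₀, hv₀⟩ := argmaxF_nonempty ⟨v, hvV⟩ c
    set S := argmaxF V c with hS
    -- ranks
    set D := Module.finrank ℝ (vectorSpan ℝ (V : Set (Fin d → ℝ))) with hD
    set r := Module.finrank ℝ (vectorSpan ℝ (↑S : Set (Fin d → ℝ))) with hr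
    have hrD : r ≤ D :=
      Submodule.finrank_mono (vectorSpan_mono ℝ (by exact_mod_cast argmaxF_subset V c))
    have hrne : r ≠ D := fun h => hvn (mem_argmaxF_of_finrank_eq hvV h)
    by_cases hfac : r + 1 = D
    · exact ⟨c, Finset.Subset.refl _, hvn, hfac⟩
    -- now r + 2 ≤ D
    have hvnspan : v ∉ affineSpan ℝ (↑S : Set (Fin d → ℝ)) := by
      intro hvS
      have hcv : c v = c v₀ :=
        linear_eq_on_affineSpan (fun x hx => argmaxF_const (by exact_mod_cast hx) hv₀) hvS
      exact hvn (mem_argmaxF.2 ⟨hvV, fun w hw => hcv ▸ (mem_argmaxF.1 hv₀).2 w hw⟩)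
    -- find a point outside the span of S ∪ {v}
    have hexw : ∃ w₁ ∈ V, w₁ ∉ affineSpan ℝ (insert v (↑S : Set (Fin d → ℝ))) := by
      by_contra hcon
      push_neg at hcon
      have h1 : affineSpan ℝ (V : Set (Fin d → ℝ)) ≤
          affineSpan ℝ (insert v (↑S : Set (Fin d → ℝ))) := by
        rw [affineSpan_le]; intro y hy; exact hcon y (by exact_mod_cast hy)
      have h2 : vectorSpan ℝ (V : Set (Fin d → ℝ)) ≤
          vectorSpan ℝ (insert v (↑S : Set (Fin d → ℝ))) := by
        rw [← direction_affineSpan, ← direction_affineSpan]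
        exact AffineSubspace.direction_le h1
      have h3 : D ≤ Module.finrank ℝ (vectorSpan ℝ (insert v (↑S : Set (Fin d → ℝ)))) :=
        Submodule.finrank_mono h2
      have h4 := finrank_vectorSpan_insert_le_set ℝ (↑S : Set (Fin d → ℝ)) v
      omega
    obtain ⟨w₁, hw₁V, hw₁n⟩ := hexw
    obtain ⟨g, γ, hg, hg1⟩ :=
      exists_affine_separating (Set.mem_insert v (↑S : Set (Fin d → ℝ))) hw₁n
    have hgS : ∀ s ∈ S, g s = γ := fun s hs =>
      hg s (subset_affineSpan ℝ _ (Set.mem_insert_of_mem _ (by exact_mod_cast hs)))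
    have hgv : g v = γ := hg v (subset_affineSpan ℝ _ (Set.mem_insert v _))
    -- the entering set
    set T := V.filter (fun w => γ < g w) with hT
    have hw₁T : w₁ ∈ T := Finset.mem_filter.2 ⟨hw₁V, by rw [hg1]; linarith⟩
    have hTS : ∀ w ∈ T, w ∉ S := by
      intro w hw hwS
      have := hgS w hwS
      have := (Finset.mem_filter.1 hw).2
      linarith
    obtain ⟨ws, hwsT, hmin⟩ :=
      T.exists_min_image (fun w => (c v₀ - c w) / (g w - γ)) ⟨w₁, hw₁T⟩
    have hwsV : ws ∈ V := (Finset.mem_filter.1 hwsT).1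
    have hwsg : γ < g ws := (Finset.mem_filter.1 hwsT).2
    have hwsc : c ws < c v₀ := lt_max_of_not_argmaxF hwsV (hTS ws hwsT) hv₀
    set t := (c v₀ - c ws) / (g ws - γ) with ht
    have htpos : 0 < t := div_pos (by linarith) (by linarith)
    set c' := c + t • g with hc'
    have hc'app : ∀ x, c' x = c x + t * g x := by
      intro x; simp [hc', LinearMap.add_apply, LinearMap.smul_apply, smul_eq_mul]
    -- the upper bound
    have hbound : ∀ w ∈ V, c' w ≤ c v₀ + t * γ := by
      intro w hw
      rw [hc'app]
      by_cases hwT : γ < g w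
      · have h5 : t ≤ (c v₀ - c w) / (g w - γ) := hmin w (Finset.mem_filter.2 ⟨hw, hwT⟩)
        have h6 : t * (g w - γ) ≤ c v₀ - c w := by
          rw [← le_div_iff₀ (by linarith)]
          exact h5
        nlinarith
      · push_neg at hwT
        have h7 : c w ≤ c v₀ := (mem_argmaxF.1 hv₀).2 w hw
        nlinarith
    have hSmax : ∀ s ∈ S, c' s = c v₀ + t * γ := by
      intro s hs
      rw [hc'app, argmaxF_const hs hv₀, hgS s hs]
    have hSsub : S ⊆ argmaxF V c' := by
      intro s hs
      refine mem_argmaxF.2 ⟨argmaxF_subset V c hs, fun w hw => ?_⟩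
      rw [hSmax s hs]
      exact hbound w hw
    have hwsmax : c' ws = c v₀ + t * γ := by
      rw [hc'app]
      have : t * (g ws - γ) = c v₀ - c ws := div_mul_cancel₀ _ (by linarith)
      nlinarith [this]
    have hwsmem : ws ∈ argmaxF V c' := by
      refine mem_argmaxF.2 ⟨hwsV, fun w hw => ?_⟩
      rw [hwsmax]
      exact hbound w hw
    have hvn' : v ∉ argmaxF V c' := by
      intro hmem
      have h8 := (mem_argmaxF.1 hmem).2 v₀ (argmaxF_subset V c hv₀)
      rw [hSmax v₀ hv₀] at h8
      have h9 : c' v = c v + t * γ := by rw [hc'app, hgv]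
      have h10 : c v < c v₀ := lt_max_of_not_argmaxF hvV hvn hv₀
      linarith
    -- cardinality decreases
    have hsub2 : V \ argmaxF V c' ⊆ V \ S := by
      intro w hw
      rw [Finset.mem_sdiff] at hw ⊢
      exact ⟨hw.1, fun hwS => hw.2 (hSsub hwS)⟩
    have hlt : (V \ argmaxF V c').card < (V \ S).card := by
      apply Finset.card_lt_card
      rw [Finset.ssubset_iff_of_subset hsub2]
      refine ⟨ws, Finset.mem_sdiff.2 ⟨hwsV, hTS ws hwsT⟩, fun hcon => ?_⟩
      exact (Finset.mem_sdiff.1 hcon).2 hwsmem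
    obtain ⟨c'', h1, h2, h3⟩ := ih c' hvn' (by omega)
    exact ⟨c'', Finset.Subset.trans hSsub h1, h2, h3⟩

theorem exists_facet_functional (V : Finset (Fin d → ℝ)) (c : (Fin d → ℝ) →ₗ[ℝ] ℝ)
    {v : Fin d → ℝ} (hvV : v ∈ V) (hvn : v ∉ argmaxF V c) :
    ∃ c' : (Fin d → ℝ) →ₗ[ℝ] ℝ, argmaxF V c ⊆ argmaxF V c' ∧ v ∉ argmaxF V c' ∧
      Module.finrank ℝ (vectorSpan ℝ (↑(argmaxF V c') : Set (Fin d → ℝ))) + 1 =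
        Module.finrank ℝ (vectorSpan ℝ (V : Set (Fin d → ℝ))) :=
  exists_facet_functional_aux V hvV (V \ argmaxF V c).card c hvn le_rfl

open Finset

/-- The vertex of the permutahedron associated to a permutation. -/
def pvert {n : ℕ} (σ : Equiv.Perm (Fin n)) : Fin n → ℝ := fun v => ((σ⁻¹ v : Fin n) : ℕ) + 1

theorem pvert_injective {n : ℕ} : Function.Injective (pvert (n := n)) := by
  intro σ τ h
  have h1 : ∀ v, ((σ⁻¹ v : Fin n) : ℕ) = ((τ⁻¹ v : Fin n) : ℕ) := by
    intro v
    have := congrFun h v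
    unfold pvert at this
    have : (((σ⁻¹ v : Fin n) : ℕ) : ℝ) = (((τ⁻¹ v : Fin n) : ℕ) : ℝ) := by linarith
    exact_mod_cast this
  have h2 : σ⁻¹ = τ⁻¹ := Equiv.ext fun v => Fin.val_injective (h1 v)
  exact inv_injective h2

open Classical in
/-- The vertex set of the permutahedron as a finset. -/
noncomputable def pvertSet (n : ℕ) : Finset (Fin n → ℝ) :=
  Finset.univ.image (pvert (n := n))

theorem pvertSet_nonempty (n : ℕ) : (pvertSet n).Nonempty :=
  ⟨pvert 1, Finset.mem_image.2 ⟨1, Finset.mem_univ _, rfl⟩⟩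

theorem mem_pvertSet {n : ℕ} {x : Fin n → ℝ} :
    x ∈ pvertSet n ↔ ∃ σ : Equiv.Perm (Fin n), x = pvert σ := by
  simp only [pvertSet, Finset.mem_image, Finset.mem_univ, true_and]
  exact ⟨fun ⟨σ, h⟩ => ⟨σ, h.symm⟩, fun ⟨σ, h⟩ => ⟨σ, h.symm⟩⟩

theorem permutahedron_eq (n : ℕ) :
    permutahedron n = convexHull ℝ (↑(pvertSet n) : Set (Fin n → ℝ)) := by
  unfold permutahedron
  congr 1
  ext x
  simp only [Set.mem_setOf_eq, Finset.mem_coe, mem_pvertSet]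
  constructor
  · rintro ⟨σ, h⟩
    exact ⟨σ, funext h⟩
  · rintro ⟨σ, rfl⟩
    exact ⟨σ, fun v => rfl⟩

/-- The linear functional associated to a permutation. -/
noncomputable def pfun {n : ℕ} (σ : Equiv.Perm (Fin n)) : (Fin n → ℝ) →ₗ[ℝ] ℝ :=
  ∑ v : Fin n, (((σ⁻¹ v : Fin n) : ℕ) : ℝ) • LinearMap.proj v

theorem pfun_apply {n : ℕ} (σ : Equiv.Perm (Fin n)) (x : Fin n → ℝ) :
    pfun σ x = ∑ v : Fin n, (((σ⁻¹ v : Fin n) : ℕ) : ℝ) * x v := by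
  simp [pfun, LinearMap.proj]

theorem pfun_strict_max {n : ℕ} {σ τ : Equiv.Perm (Fin n)} (h : τ ≠ σ) :
    pfun σ (pvert τ) < pfun σ (pvert σ) := by
  set a : Fin n → ℝ := fun v => (((σ⁻¹ v : Fin n) : ℕ) : ℝ) with ha
  set b : Fin n → ℝ := fun v => (((τ⁻¹ v : Fin n) : ℕ) : ℝ) with hb
  have hA : pfun σ (pvert τ) = (∑ v, a v * b v) + ∑ v, a v := by
    rw [pfun_apply]
    rw [← Finset.sum_add_distrib]
    apply Finset.sum_congr rfl
    intro v _
    show a v * (b v + 1) = a v * b v + a v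
    ring
  have hB : pfun σ (pvert σ) = (∑ v, a v * a v) + ∑ v, a v := by
    rw [pfun_apply]
    rw [← Finset.sum_add_distrib]
    apply Finset.sum_congr rfl
    intro v _
    show a v * (a v + 1) = a v * a v + a v
    ring
  have hsq : ∑ v, b v * b v = ∑ v, a v * a v := by
    have h1 : ∑ v, b v * b v = ∑ v : Fin n, ((v : ℕ) : ℝ) * ((v : ℕ) : ℝ) :=
      Equiv.sum_comp τ⁻¹ (fun u => ((u : ℕ) : ℝ) * ((u : ℕ) : ℝ))
    have h2 : ∑ v, a v * a v = ∑ v : Fin n, ((v : ℕ) : ℝ) * ((v : ℕ) : ℝ) :=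
      Equiv.sum_comp σ⁻¹ (fun u => ((u : ℕ) : ℝ) * ((u : ℕ) : ℝ))
    rw [h1, h2]
  have hex : ∃ v, a v ≠ b v := by
    by_contra hcon
    push_neg at hcon
    apply h
    apply pvert_injective
    funext v
    show (((τ⁻¹ v : Fin n) : ℕ) : ℝ) + 1 = (((σ⁻¹ v : Fin n) : ℕ) : ℝ) + 1
    have := hcon v
    rw [ha, hb] at this
    simp only at this
    rw [this]
  obtain ⟨v₁, hv₁⟩ := hex
  have hpos : 0 < ∑ v, (a v - b v) ^ 2 := by
    apply Finset.sum_pos'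
    · intro i _; positivity
    · exact ⟨v₁, Finset.mem_univ _, by have : a v₁ - b v₁ ≠ 0 := sub_ne_zero.2 hv₁; positivity⟩
  have hexp : ∑ v, (a v - b v) ^ 2 =
      (∑ v, a v * a v) + (∑ v, b v * b v) - 2 * ∑ v, a v * b v := by
    rw [← Finset.sum_add_distrib, Finset.mul_sum, ← Finset.sum_sub_distrib]
    apply Finset.sum_congr rfl
    intro v _
    ring
  rw [hA, hB]
  have : ∑ v, a v * b v < ∑ v, a v * a v := by
    rw [hsq] at hexp
    nlinarith
  linarith

open Classical in
theorem argmax_pfun (n : ℕ) (σ : Equiv.Perm (Fin n)) :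
    ∀ w ∈ pvertSet n, w ≠ pvert σ → pfun σ w < pfun σ (pvert σ) := by
  intro w hw hne
  obtain ⟨τ, rfl⟩ := mem_pvertSet.1 hw
  exact pfun_strict_max (fun hc => hne (by rw [hc]))

end Aux
theorem facet_lower_bound_extension_permutahedron (n d : ℕ) (V : Finset (Fin d → ℝ))
    (Q : Set (Fin d → ℝ)) (hQ : Q = convexHull ℝ (V : Set (Fin d → ℝ)))
    (p : (Fin d → ℝ) →ₗ[ℝ] (Fin n → ℝ)) (hp : p '' Q = permutahedron n) :
    Real.logb 2 (Nat.factorial n : ℝ) ≤ ({F | IsFacetOf F Q}.ncard : ℝ) := by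
  classical
  rcases Nat.lt_or_ge n 2 with hn | hn
  · have h1 : (Nat.factorial n : ℝ) = 1 := by
      interval_cases n <;> norm_num [Nat.factorial]
    rw [h1, Real.logb_one]
    positivity
  -- nontrivial case
  have hperm_ne : (permutahedron n).Nonempty := by
    rw [permutahedron_eq]
    obtain ⟨y, hy⟩ := pvertSet_nonempty n
    exact ⟨y, subset_convexHull ℝ _ (Finset.mem_coe.2 hy)⟩
  have hQne : Q.Nonempty := by
    rw [← Set.image_nonempty (f := p), hp]
    exact hperm_ne
  have hV : V.Nonempty := by
    rcases V.eq_empty_or_nonempty with h | h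
    · exfalso
      rw [hQ, h] at hQne
      simp at hQne
    · exact h
  -- the functionals and faces
  set cf : Equiv.Perm (Fin n) → ((Fin d → ℝ) →ₗ[ℝ] ℝ) := fun σ => (pfun σ).comp p with hcf
  set Ff : Equiv.Perm (Fin n) → Set (Fin d → ℝ) :=
    fun σ => convexHull ℝ (↑(argmaxF V (cf σ)) : Set (Fin d → ℝ)) with hFf
  have hFface : ∀ σ : Equiv.Perm (Fin n),
      {x ∈ Q | ∀ y ∈ Q, (cf σ) y ≤ (cf σ) x} = Ff σ := by
    intro σ
    rw [hQ]
    exact face_eq V hV (cf σ)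
  -- the argmax over the permutahedron vertex set
  have hargmax : ∀ σ : Equiv.Perm (Fin n), argmaxF (pvertSet n) (pfun σ) = {pvert σ} := by
    intro σ
    apply Finset.ext
    intro w
    simp only [Finset.mem_singleton, mem_argmaxF]
    constructor
    · rintro ⟨hwP, hmax⟩
      by_contra hne
      have h1 := argmax_pfun n σ w hwP hne
      have h2 := hmax (pvert σ) (mem_pvertSet.2 ⟨σ, rfl⟩)
      linarith
    · rintro rfl
      refine ⟨mem_pvertSet.2 ⟨σ, rfl⟩, fun w hw => ?_⟩
      by_cases hne : w = pvert σ
      · rw [hne]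
      · exact le_of_lt (argmax_pfun n σ w hw hne)
  have hPface : ∀ σ : Equiv.Perm (Fin n),
      {z ∈ permutahedron n | ∀ y ∈ permutahedron n, pfun σ y ≤ pfun σ z} = {pvert σ} := by
    intro σ
    rw [permutahedron_eq, face_eq (pvertSet n) (pvertSet_nonempty n) (pfun σ), hargmax,
      Finset.coe_singleton, convexHull_singleton]
  -- image of the faces
  have himg : ∀ σ : Equiv.Perm (Fin n), p '' (Ff σ) = {pvert σ} := by
    intro σ
    have hsub : p '' (Ff σ) ⊆ {pvert σ} := by
      rintro z ⟨x, hx, rfl⟩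
      rw [← hFface σ] at hx
      obtain ⟨hxQ, hxmax⟩ := hx
      rw [← hPface σ]
      refine ⟨by rw [← hp]; exact ⟨x, hxQ, rfl⟩, ?_⟩
      intro y hy
      rw [← hp] at hy
      obtain ⟨z', hz', rfl⟩ := hy
      exact hxmax z' hz'
    obtain ⟨x₀, hx₀⟩ := argmaxF_nonempty hV (cf σ)
    have hx₀F : x₀ ∈ Ff σ := subset_convexHull ℝ _ (Finset.mem_coe.2 hx₀)
    have : p x₀ = pvert σ := hsub ⟨x₀, hx₀F, rfl⟩
    apply Set.Subset.antisymm hsub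
    rintro z rfl
    exact ⟨x₀, hx₀F, this⟩
  -- the finite set of facets
  set Facets : Finset (Set (Fin d → ℝ)) :=
    (V.powerset.image (fun W : Finset (Fin d → ℝ) => convexHull ℝ (↑W : Set (Fin d → ℝ)))).filter
      (fun F => IsFacetOf F Q) with hFacetsDef
  have hFacets_iff : ∀ F : Set (Fin d → ℝ), IsFacetOf F Q ↔ F ∈ Facets := by
    intro F
    constructor
    · intro hF
      rw [hFacetsDef, Finset.mem_filter]
      refine ⟨Finset.mem_image.2 ?_, hF⟩
      obtain ⟨hface, hne, hneq, hrank⟩ := hF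
      rcases hface with h | ⟨ℓ, h⟩
      · exact absurd h hneq
      · refine ⟨argmaxF V ℓ, Finset.mem_powerset.2 (argmaxF_subset V ℓ), ?_⟩
        rw [h, hQ]
        exact (face_eq V hV ℓ).symm
    · intro h
      exact (Finset.mem_filter.1 h).2
  have hset : {F | IsFacetOf F Q} = (↑Facets : Set (Set (Fin d → ℝ))) := by
    ext F
    simp only [Set.mem_setOf_eq, Finset.mem_coe]
    exact hFacets_iff F
  -- the facets built from the rotation lemma
  have hbuild : ∀ (c : (Fin d → ℝ) →ₗ[ℝ] ℝ) {v : Fin d → ℝ}, v ∈ V → v ∉ argmaxF V c →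
      ∃ G : Set (Fin d → ℝ), IsFacetOf G Q ∧
        convexHull ℝ (↑(argmaxF V c) : Set (Fin d → ℝ)) ⊆ G ∧
        (∀ u ∈ V, u ∈ G → u ∈ argmaxF V c → True) ∧
        v ∉ G := by
    intro c v hvV hvn
    obtain ⟨c', hsub, hvout, hrank⟩ := exists_facet_functional V c hvV hvn
    refine ⟨convexHull ℝ (↑(argmaxF V c') : Set (Fin d → ℝ)), ?_, ?_, fun _ _ _ _ => trivial, ?_⟩
    · refine ⟨Or.inr ⟨c', by rw [hQ]; exact (face_eq V hV c').symm⟩, ?_, ?_, ?_⟩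
      · obtain ⟨x, hx⟩ := argmaxF_nonempty hV c'
        exact ⟨x, subset_convexHull ℝ _ (Finset.mem_coe.2 hx)⟩
      · intro hGQ
        have h1 : Module.finrank ℝ (vectorSpan ℝ
            (convexHull ℝ (↑(argmaxF V c') : Set (Fin d → ℝ)))) =
            Module.finrank ℝ (vectorSpan ℝ Q) := by rw [hGQ]
        rw [vectorSpan_convexHull', hQ, vectorSpan_convexHull'] at h1
        omega
      · rw [vectorSpan_convexHull', hQ, vectorSpan_convexHull']
        exact hrank
    · exact convexHull_mono (by exact_mod_cast hsub)
    · intro hvG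
      exact hvout (mem_argmaxF_of_mem_convexHull hvV hvG)
  -- injectivity of the facet-set map
  have hSinj : ∀ σ τ : Equiv.Perm (Fin n),
      Facets.filter (fun G => Ff σ ⊆ G) = Facets.filter (fun G => Ff τ ⊆ G) →
      argmaxF V (cf σ) ⊆ argmaxF V (cf τ) := by
    intro σ τ hT v hvS
    by_contra hvn
    have hvV : v ∈ V := argmaxF_subset V (cf σ) hvS
    obtain ⟨G, hGfacet, hGsub, -, hvG⟩ := hbuild (cf τ) hvV hvn
    have hGT : G ∈ Facets.filter (fun G => Ff τ ⊆ G) :=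
      Finset.mem_filter.2 ⟨(hFacets_iff G).1 hGfacet, hGsub⟩
    rw [← hT] at hGT
    have hFss : Ff σ ⊆ G := (Finset.mem_filter.1 hGT).2
    exact hvG (hFss (subset_convexHull ℝ _ (Finset.mem_coe.2 hvS)))
  have hinj : ∀ σ τ : Equiv.Perm (Fin n),
      Facets.filter (fun G => Ff σ ⊆ G) = Facets.filter (fun G => Ff τ ⊆ G) → σ = τ := by
    intro σ τ hT
    have h1 : argmaxF V (cf σ) = argmaxF V (cf τ) :=
      Finset.Subset.antisymm (hSinj σ τ hT) (hSinj τ σ hT.symm)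
    have h2 : Ff σ = Ff τ := by rw [hFf]; simp only; rw [h1]
    have h3 : ({pvert σ} : Set (Fin n → ℝ)) = {pvert τ} := by
      rw [← himg σ, ← himg τ, h2]
    exact pvert_injective (Set.singleton_eq_singleton_iff.1 h3)
  -- counting
  have hcard : Nat.factorial n ≤ 2 ^ Facets.card := by
    have h1 : (Finset.univ : Finset (Equiv.Perm (Fin n))).card ≤ Facets.powerset.card := by
      apply Finset.card_le_card_of_injOn (fun σ => Facets.filter (fun G => Ff σ ⊆ G))
      · intro σ _
        exact Finset.mem_powerset.2 (Finset.filter_subset _ _)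
      · intro σ _ τ _ h
        exact hinj σ τ h
    rw [Finset.card_powerset, Finset.card_univ, Fintype.card_perm, Fintype.card_fin] at h1
    exact h1
  rw [hset, Set.ncard_coe_finset]
  have hfactpos : (0 : ℝ) < (Nat.factorial n : ℝ) := by
    exact_mod_cast Nat.factorial_pos n
  have h2 : Real.logb 2 (Nat.factorial n : ℝ) ≤
      Real.logb 2 ((2 : ℝ) ^ (Facets.card : ℕ)) := by
    apply Real.logb_le_logb_of_le one_lt_two hfactpos
    exact_mod_cast hcard
  calc Real.logb 2 (Nat.factorial n : ℝ) ≤ Real.logb 2 ((2 : ℝ) ^ (Facets.card : ℕ)) := h2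
    _ = (Facets.card : ℝ) := by
        rw [← Real.rpow_natCast]
        exact Real.logb_rpow (by norm_num) (by norm_num)
end

section
/- Let n ≥ 5 and let U be a subgroup of the symmetric group S_n whose index satisfies (S_n : U) < n(n-1)/2. If there exist two distinct elements v, w ∈ {1,...,n} such that every even permutation fixing both v and w lies in U, but the full alternating group A_n is not contained in U, then there exists a single element u ∈ {1,...,n} such that every even permutation fixing u lies in U. -/
open Equiv MulAction



lemma cyc3 {n : ℕ} (v w x y z : Fin n)
    (hxy : x ≠ y) (hyz : y ≠ z) (hxz : x ≠ z)
    (hxv : x ≠ v) (hxw : x ≠ w) (hyv : y ≠ v) (hyw : y ≠ w) (hzv : z ≠ v) (hzw : z ≠ w) :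
    ∃ h : Equiv.Perm (Fin n), h ∈ alternatingGroup (Fin n) ∧ h v = v ∧ h w = w ∧
      h x = y ∧ h y = z ∧ h z = x := by
  refine ⟨Equiv.swap x z * Equiv.swap x y, ?_, ?_, ?_, ?_, ?_, ?_⟩
  · rw [Equiv.Perm.mem_alternatingGroup]
    simp [Equiv.Perm.sign_swap hxz, Equiv.Perm.sign_swap hxy]
  · simp [Equiv.swap_apply_of_ne_of_ne (Ne.symm hxv) (Ne.symm hyv),
      Equiv.swap_apply_of_ne_of_ne (Ne.symm hxv) (Ne.symm hzv)]
  · simp [Equiv.swap_apply_of_ne_of_ne (Ne.symm hxw) (Ne.symm hyw),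
      Equiv.swap_apply_of_ne_of_ne (Ne.symm hxw) (Ne.symm hzw)]
  · simp [Equiv.swap_apply_of_ne_of_ne (Ne.symm hxy) hyz]
  · simp [Equiv.swap_apply_of_ne_of_ne hxy.symm hyz]
  · simp [Equiv.swap_apply_of_ne_of_ne hxz.symm hyz.symm]


lemma fresh {n : ℕ} (hn : 5 ≤ n) (a b c d : Fin n) :
    ∃ z : Fin n, z ≠ a ∧ z ≠ b ∧ z ≠ c ∧ z ≠ d := by
  by_contra h
  push_neg at h
  have hsub : (Finset.univ : Finset (Fin n)) ⊆ {a, b, c, d} := by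
    intro z _
    have := h z
    simp only [Finset.mem_insert, Finset.mem_singleton]
    tauto
  have hle := Finset.card_le_card hsub
  have h4 : ({a, b, c, d} : Finset (Fin n)).card ≤ 4 := by
    calc ({a, b, c, d} : Finset (Fin n)).card
        ≤ ({b, c, d} : Finset (Fin n)).card + 1 := Finset.card_insert_le _ _
      _ ≤ (({c, d} : Finset (Fin n)).card + 1) + 1 :=
          Nat.add_le_add_right (Finset.card_insert_le _ _) 1
      _ ≤ ((({d} : Finset (Fin n)).card + 1) + 1) + 1 :=
          Nat.add_le_add_right (Nat.add_le_add_right (Finset.card_insert_le _ _) 1) 1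
      _ ≤ 4 := by simp
  simp [Finset.card_univ] at hle
  omega


lemma moveH {n : ℕ} (hn : 5 ≤ n) (v w x y : Fin n)
    (hxv : x ≠ v) (hxw : x ≠ w) (hyv : y ≠ v) (hyw : y ≠ w) :
    ∃ h : Equiv.Perm (Fin n), h ∈ alternatingGroup (Fin n) ∧ h v = v ∧ h w = w ∧ h x = y := by
  rcases eq_or_ne x y with rfl | hxy
  · exact ⟨1, Subgroup.one_mem _, rfl, rfl, rfl⟩
  · obtain ⟨z, hzv, hzw, hzx, hzy⟩ := fresh hn v w x y
    obtain ⟨h, hA, h1, h2, h3, -, -⟩ :=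
      cyc3 v w x y z hxy (Ne.symm hzy) (Ne.symm hzx) hxv hxw hyv hyw hzv hzw
    exact ⟨h, hA, h1, h2, h3⟩


lemma orbit_stab (G : Type*) [Group G] (β : Type*) [MulAction G β] (b : β) :
    Nat.card (orbit G b) * Nat.card (stabilizer G b) = Nat.card G := by
  rw [Nat.card_congr (orbitEquivQuotientStabilizer G b), ← Subgroup.index_eq_card]
  exact Subgroup.index_mul_card _

lemma good {n : ℕ} (hn : 5 ≤ n) (U : Subgroup (Equiv.Perm (Fin n)))
    (v w : Fin n) (hvw : v ≠ w)
    (hfix : ∀ π : Equiv.Perm (Fin n), π ∈ alternatingGroup (Fin n) → π v = v → π w = w → π ∈ U)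
    (k : Equiv.Perm (Fin n)) (hkU : k ∈ U) (hkA : k ∈ alternatingGroup (Fin n))
    (hkv : k v = v) (hkw : k w ≠ w) :
    ∀ π : Equiv.Perm (Fin n), π ∈ alternatingGroup (Fin n) → π v = v → π ∈ U := by
  set A := alternatingGroup (Fin n) with hA
  set Sv : Subgroup (Equiv.Perm (Fin n)) := A ⊓ stabilizer (Equiv.Perm (Fin n)) v with hSv
  set W : Subgroup (Equiv.Perm (Fin n)) := U ⊓ Sv with hW
  have hle : W ≤ Sv := inf_le_right
  suffices hWS : W = Sv by
    intro π hπA hπv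
    have hπS : π ∈ Sv := ⟨hπA, hπv⟩
    rw [← hWS] at hπS
    exact hπS.1
  refine Subgroup.eq_of_le_of_card_ge hle ?_
  have osW := orbit_stab W (Fin n) w
  have osS := orbit_stab Sv (Fin n) w
  -- orbit inclusion
  have horb : orbit Sv w ⊆ orbit W w := by
    intro x hx
    obtain ⟨g, rfl⟩ := hx
    have hgv : (g : Equiv.Perm (Fin n)) v = v := g.2.2
    have hxv : (g : Equiv.Perm (Fin n)) w ≠ v := by
      intro hc
      exact hvw ((g : Equiv.Perm (Fin n)).injective (hc.trans hgv.symm)).symm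
    show (g : Equiv.Perm (Fin n)) w ∈ orbit W w
    rcases eq_or_ne ((g : Equiv.Perm (Fin n)) w) w with he | hne
    · rw [he]; exact mem_orbit_self w
    · set x := (g : Equiv.Perm (Fin n)) w with hxdef
      have htv : k w ≠ v := fun hc => hvw (k.injective (hc.trans hkv.symm)).symm
      obtain ⟨h, hhA, hhv, hhw, hht⟩ := moveH hn v w (k w) x htv hkw hxv hne  -- careful arg order
      have hhU : h ∈ U := hfix h hhA hhv hhw
      have hmem : h * k ∈ W :=
        ⟨U.mul_mem hhU hkU, A.mul_mem hhA hkA, by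
          show (h * k) v = v
          simp [Equiv.Perm.mul_apply, hkv, hhv]⟩
      exact ⟨⟨h * k, hmem⟩, by show (h * k) w = x; simp [Equiv.Perm.mul_apply, hht]⟩
  have hcorb : Nat.card (orbit Sv w) ≤ Nat.card (orbit W w) :=
    Nat.card_mono (Set.toFinite _) horb
  -- stabilizer injection
  have hstab : Nat.card (stabilizer Sv w) ≤ Nat.card (stabilizer W w) := by
    have hf : ∀ g : stabilizer Sv w, ((g : Sv) : Equiv.Perm (Fin n)) ∈ W ∧
        ((g : Sv) : Equiv.Perm (Fin n)) w = w := by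
      intro g
      have hgw : ((g : Sv) : Equiv.Perm (Fin n)) w = w := g.2
      have hgA : ((g : Sv) : Equiv.Perm (Fin n)) ∈ A := (g : Sv).2.1
      have hgv : ((g : Sv) : Equiv.Perm (Fin n)) v = v := (g : Sv).2.2
      exact ⟨⟨hfix _ hgA hgv hgw, hgA, hgv⟩, hgw⟩
    let f : stabilizer Sv w → stabilizer W w := fun g => ⟨⟨_, (hf g).1⟩, (hf g).2⟩
    have hinj : Function.Injective f := by
      intro a b hab
      have : ((a : Sv) : Equiv.Perm (Fin n)) = ((b : Sv) : Equiv.Perm (Fin n)) :=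
        congrArg (fun t : stabilizer W w => ((t : W) : Equiv.Perm (Fin n))) hab
      exact Subtype.ext (Subtype.ext this)
    exact Nat.card_le_card_of_injective f hinj
  calc Nat.card Sv = Nat.card (orbit Sv w) * Nat.card (stabilizer Sv w) := osS.symm
    _ ≤ Nat.card (orbit W w) * Nat.card (stabilizer W w) := Nat.mul_le_mul hcorb hstab
    _ = Nat.card W := osW


lemma bad {n : ℕ} (hn : 5 ≤ n) (U : Subgroup (Equiv.Perm (Fin n)))
    (hidx : U.index < n * (n - 1) / 2) (v w : Fin n) (hvw : v ≠ w)
    (hfix : ∀ π : Equiv.Perm (Fin n), π ∈ alternatingGroup (Fin n) → π v = v → π w = w → π ∈ U)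
    (hB : ∀ g : Equiv.Perm (Fin n), g ∈ U → g ∈ alternatingGroup (Fin n) →
      (g v = v ↔ g w = w)) : False := by
  classical
  set A := alternatingGroup (Fin n) with hAdef
  set V : Subgroup (Equiv.Perm (Fin n)) := U ⊓ A with hVdef
  have hmem : ∀ g : Equiv.Perm (Fin n), g ∈ V → g ∈ U ∧ g ∈ A := fun g hg => hg
  have hBV : ∀ g : Equiv.Perm (Fin n), g ∈ V → (g v = v ↔ g w = w) :=
    fun g hg => hB g hg.1 hg.2
  -- Fact F
  have F : ∀ g ∈ V, ∀ p ∈ V, p (g v) = g v → p (g w) = g w := by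
    intro g hg p hp hpv
    have hq : g⁻¹ * p * g ∈ V := V.mul_mem (V.mul_mem (V.inv_mem hg) hp) hg
    have hqv : (g⁻¹ * p * g) v = v := by
      simp [Equiv.Perm.mul_apply, hpv]
    have hqw := (hBV _ hq).mp hqv
    have : g⁻¹ (p (g w)) = w := by simpa [Equiv.Perm.mul_apply] using hqw
    have := congrArg g this
    simpa using this
  -- B1
  have B1 : ∀ g ∈ V, g v = v ∨ g v = w := by
    intro g hg
    by_contra hx
    push_neg at hx
    obtain ⟨hx1, hx2⟩ := hx
    set x := g v with hxdef
    set b := g w with hbdef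
    have hbx : b ≠ x := fun hc => hvw (g.injective hc.symm)
    rcases eq_or_ne b w with hbw | hbw
    · exact hx1 ((hBV g hg).mpr hbw)
    rcases eq_or_ne b v with hbv | hbv
    · -- g w = v
      obtain ⟨y, hyv, hyw, hyx, -⟩ := fresh hn v w x x
      obtain ⟨z, hzv, hzw, hzx, hzy⟩ := fresh hn v w x y
      obtain ⟨h, hhA, hhv, hhw, hhx, -, -⟩ :=
        cyc3 v w x y z (Ne.symm hyx) (Ne.symm hzy) (Ne.symm hzx) hx1 hx2 hyv hyw hzv hzw
      have hhV : h ∈ V := ⟨hfix h hhA hhv hhw, hhA⟩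
      have hg' : g⁻¹ * h * g ∈ V := V.mul_mem (V.mul_mem (V.inv_mem hg) hhV) hg
      have hg'w : (g⁻¹ * h * g) w = w := by
        have : g⁻¹ v = w := by rw [← hbv, hbdef]; simp
        simp [Equiv.Perm.mul_apply, ← hbdef, hbv, hhv, this]
      have hg'v := (hBV _ hg').mpr hg'w
      have : g⁻¹ (h x) = v := by simpa [Equiv.Perm.mul_apply, ← hxdef] using hg'v
      have : h x = g v := by
        have := congrArg g this
        simpa using this
      rw [hhx, ← hxdef] at this
      exact hyx this
    · -- b ∉ {v, w}
      obtain ⟨z, hzx, hzb, hzv, hzw⟩ := fresh hn x b v w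
      obtain ⟨h1, h1A, h1v, h1w, h1x, h1b, -⟩ :=
        cyc3 v w x b z hbx.symm hzb.symm hzx.symm hx1 hx2 hbv hbw hzv hzw
      have h1V : h1 ∈ V := ⟨hfix h1 h1A h1v h1w, h1A⟩
      have hg'V : h1 * g ∈ V := V.mul_mem h1V hg
      have hg'v : (h1 * g) v = b := by simp [Equiv.Perm.mul_apply, ← hxdef, h1x]
      have hg'w : (h1 * g) w = z := by simp [Equiv.Perm.mul_apply, ← hbdef, h1b]
      set d := g⁻¹ z with hddef
      have hdv : d ≠ v := by
        intro hc
        have : z = g v := by rw [← hc, hddef]; simp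
        exact hzx (this.trans hxdef.symm)
      have hdw : d ≠ w := by
        intro hc
        have : z = g w := by rw [← hc, hddef]; simp
        exact hzb (this.trans hbdef.symm)
      obtain ⟨e, hev, hew, hed, -⟩ := fresh hn v w d d
      obtain ⟨f0, hf0v, hf0w, hf0d, hf0e⟩ := fresh hn v w d e
      obtain ⟨h2, h2A, h2v, h2w, h2d, -, -⟩ :=
        cyc3 v w d e f0 (Ne.symm hed) (Ne.symm hf0e) (Ne.symm hf0d) hdv hdw hev hew hf0v hf0w
      have h2V : h2 ∈ V := ⟨hfix h2 h2A h2v h2w, h2A⟩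
      have hpV : g * h2 * g⁻¹ ∈ V := V.mul_mem (V.mul_mem hg h2V) (V.inv_mem hg)
      have hpx : (g * h2 * g⁻¹) (g v) = g v := by
        simp [Equiv.Perm.mul_apply, h2v]
      have hpb := F g hg _ hpV hpx
      have hpz : (g * h2 * g⁻¹) ((h1 * g) w) = (h1 * g) w := by
        apply F (h1 * g) hg'V _ hpV
        rw [hg'v]
        rw [← hbdef] at hpb
        exact hpb
      rw [hg'w] at hpz
      have : g (h2 d) = z := by simpa [Equiv.Perm.mul_apply, ← hddef] using hpz
      rw [h2d] at this
      have : e = d := by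
        have h5 : g e = g d := by rw [this, hddef]; simp
        exact g.injective h5
      exact hed this
  -- B2 : full description
  have B2 : ∀ g ∈ V, (g v = v ∧ g w = w) ∨ (g v = w ∧ g w = v) := by
    intro g hg
    rcases B1 g hg with h | h
    · exact Or.inl ⟨h, (hBV g hg).mp h⟩
    · refine Or.inr ⟨h, ?_⟩
      rcases B1 g⁻¹ (V.inv_mem hg) with h' | h'
      · exfalso
        have : g v = v := by
          have := congrArg g h'
          simpa using this.symm
        rw [this] at h
        exact hvw h
      · have := congrArg g h'
        simpa using this.symm
  -- injection into permutations of the complement of {v, w}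
  set P : Fin n → Prop := fun x => x ≠ v ∧ x ≠ w with hPdef
  have hstab : ∀ g ∈ V, ∀ x : Fin n, P x ↔ P (g x) := by
    intro g hg x
    rcases B2 g hg with ⟨h1, h2⟩ | ⟨h1, h2⟩ <;>
      constructor <;> intro hx <;> constructor
    · intro hc; exact hx.1 (g.injective (hc.trans h1.symm))
    · intro hc; exact hx.2 (g.injective (hc.trans h2.symm))
    · intro hc; rw [hc] at hx; exact hx.1 h1
    · intro hc; rw [hc] at hx; exact hx.2 h2
    · intro hc; exact hx.2 (g.injective (hc.trans h2.symm))
    · intro hc; exact hx.1 (g.injective (hc.trans h1.symm))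
    · intro hc; rw [hc] at hx; exact hx.2 h1
    · intro hc; rw [hc] at hx; exact hx.1 h2
  let Φ : V → Equiv.Perm {x : Fin n // P x} :=
    fun g => Equiv.Perm.subtypePerm (g : Equiv.Perm (Fin n)) (fun x => (hstab _ g.2 x).symm)
  have hΦinj : Function.Injective Φ := by
    intro a b hab
    have hpt : ∀ x : Fin n, P x → (a : Equiv.Perm (Fin n)) x = (b : Equiv.Perm (Fin n)) x := by
      intro x hx
      have := congrArg (fun e : Equiv.Perm {x : Fin n // P x} => (e ⟨x, hx⟩ : Fin n)) hab
      simpa [Φ, Equiv.Perm.subtypePerm] using this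
    set u : Equiv.Perm (Fin n) := (a : Equiv.Perm (Fin n))⁻¹ * (b : Equiv.Perm (Fin n)) with hu
    have huV : u ∈ V := V.mul_mem (V.inv_mem a.2) b.2
    have huR : ∀ x : Fin n, P x → u x = x := by
      intro x hx
      have := hpt x hx
      simp [hu, Equiv.Perm.mul_apply, ← this]
    rcases B2 u huV with ⟨h1, h2⟩ | ⟨h1, h2⟩
    · have hu1 : u = 1 := by
        ext t
        by_cases htv : t = v
        · simp [htv, h1]
        by_cases htw : t = w
        · simp [htw, h2]
        · simp [huR t ⟨htv, htw⟩]
      have : (a : Equiv.Perm (Fin n)) = (b : Equiv.Perm (Fin n)) := by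
        have := congrArg (fun e => (a : Equiv.Perm (Fin n)) * e) hu1
        simpa [hu, mul_assoc] using this.symm
      exact Subtype.ext this
    · exfalso
      have hu1 : u = Equiv.swap v w := by
        ext t
        by_cases htv : t = v
        · simp [htv, h1]
        by_cases htw : t = w
        · simp [htw, h2]
        · simp [huR t ⟨htv, htw⟩, Equiv.swap_apply_of_ne_of_ne htv htw]
      have hsign : Equiv.Perm.sign u = 1 := Equiv.Perm.mem_alternatingGroup.mp huV.2
      rw [hu1, Equiv.Perm.sign_swap hvw] at hsign
      exact absurd hsign (by decide)
  have hcardsub : Fintype.card {x : Fin n // P x} = n - 2 := by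
    rw [Fintype.card_subtype]
    have hfil : (Finset.univ.filter fun x : Fin n => P x) = Finset.univ \ {v, w} := by
      ext x
      simp [hPdef, and_comm]
    rw [hfil, Finset.card_sdiff_of_subset (Finset.subset_univ _)]
    have : ({v, w} : Finset (Fin n)).card = 2 := by
      rw [Finset.card_insert_of_notMem (by simpa using hvw), Finset.card_singleton]
    simp [this]
  have hcardV : Nat.card V ≤ (n - 2).factorial := by
    calc Nat.card V ≤ Nat.card (Equiv.Perm {x : Fin n // P x}) :=
          Nat.card_le_card_of_injective Φ hΦinj
      _ = (n - 2).factorial := by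
          rw [Nat.card_eq_fintype_card, Fintype.card_perm, hcardsub]
  -- index arithmetic
  have hnontriv : Nontrivial (Fin n) := ⟨v, w, hvw⟩
  have hi1 : U.relIndex A ≤ U.index := by
    have h0 : U.relIndex ⊤ ≠ 0 := by
      rw [Subgroup.relIndex_top_right]
      exact Subgroup.index_ne_zero_of_finite
    simpa [Subgroup.relIndex_top_right] using Subgroup.relIndex_le_of_le_right le_top h0
  have hi2 : U.relIndex A * Nat.card (U.subgroupOf A) = Nat.card A :=
    Subgroup.index_mul_card (U.subgroupOf A)
  have hi3 : Nat.card (U.subgroupOf A) = Nat.card V := by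
    rw [← Subgroup.inf_subgroupOf_right U A]
    exact Nat.card_congr (Subgroup.subgroupOfEquivOfLe inf_le_right).toEquiv
  have hi4 : 2 * Nat.card A = n.factorial := by
    rw [Nat.card_eq_fintype_card]
    show 2 * Fintype.card (alternatingGroup (Fin n)) = n.factorial
    rw [two_mul_card_alternatingGroup, Fintype.card_perm, Fintype.card_fin]
  obtain ⟨m, rfl⟩ : ∃ m, n = m + 2 := ⟨n - 2, by omega⟩
  have heven : Even ((m + 2) * (m + 1)) := by
    have := Nat.even_mul_succ_self (m + 1)
    simpa [Nat.mul_comm] using this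
  obtain ⟨t, ht⟩ := heven
  have hfact : (m + 2).factorial = (m + 2) * (m + 1) * m.factorial := by
    rw [Nat.factorial_succ, Nat.factorial_succ, ← mul_assoc]
  have hidx' : U.relIndex A < t := by
    have e1 : (m + 2) - 1 = m + 1 := by omega
    rw [e1, ht] at hidx
    omega
  have ht1 : 1 ≤ t := by
    have h0 : 0 < (m + 2) * (m + 1) := by positivity
    omega
  obtain ⟨s, rfl⟩ : ∃ s, t = s + 1 := ⟨t - 1, by omega⟩
  have hcardV' : Nat.card V ≤ m.factorial := by simpa using hcardV
  have hmf : 0 < m.factorial := Nat.factorial_pos m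
  have hcontr : (m + 2).factorial < (m + 2).factorial := by
    calc (m + 2).factorial = 2 * Nat.card A := hi4.symm
      _ = 2 * (U.relIndex A * Nat.card V) := by rw [← hi2, hi3]
      _ ≤ 2 * (s * m.factorial) :=
          Nat.mul_le_mul_left 2 (Nat.mul_le_mul (by omega) hcardV')
      _ < (m + 2).factorial := by rw [hfact, ht]; nlinarith
  exact absurd hcontr (lt_irrefl _)


theorem point_stabilizer_from_two_point_stabilizer (n : ℕ) (hn : 5 ≤ n)
    (U : Subgroup (Equiv.Perm (Fin n))) (hidx : U.index < n * (n - 1) / 2)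
    (v w : Fin n) (hvw : v ≠ w)
    (hfix : ∀ π : Equiv.Perm (Fin n),
      π ∈ alternatingGroup (Fin n) → π v = v → π w = w → π ∈ U)
    (hA : ¬ alternatingGroup (Fin n) ≤ U) :
    ∃ u : Fin n, ∀ π : Equiv.Perm (Fin n),
      π ∈ alternatingGroup (Fin n) → π u = u → π ∈ U := by
  by_cases h1 : ∃ k, k ∈ U ∧ k ∈ alternatingGroup (Fin n) ∧ k v = v ∧ k w ≠ w
  · obtain ⟨k, hkU, hkA, hkv, hkw⟩ := h1
    exact ⟨v, good hn U v w hvw hfix k hkU hkA hkv hkw⟩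
  by_cases h2 : ∃ k, k ∈ U ∧ k ∈ alternatingGroup (Fin n) ∧ k w = w ∧ k v ≠ v
  · obtain ⟨k, hkU, hkA, hkw, hkv⟩ := h2
    exact ⟨w, good hn U w v (Ne.symm hvw) (fun π ha hb hc => hfix π ha hc hb) k hkU hkA hkw hkv⟩
  exfalso
  push_neg at h1 h2
  exact bad hn U hidx v w hvw hfix
    (fun g hU hgA => ⟨fun hv => h1 g hU hgA hv, fun hw => h2 g hU hgA hw⟩)
end

section
/- For n ≥ 6, every even permutation π ∈ A_n is a product of at most four even permutations each of which fixes u or fixes w, where u ≠ w are two fixed distinct elements of {1,...,n}. -/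
open Equiv Equiv.Perm

private lemma fresh_two (n : ℕ) (hn : 6 ≤ n) (s : Finset (Fin n))
    (hs : s.card ≤ 3) : ∃ b c : Fin n, b ≠ c ∧ b ∉ s ∧ c ∉ s := by
  have hcompl : 1 < sᶜ.card := by
    rw [Finset.card_compl, Fintype.card_fin]
    omega
  obtain ⟨b, hb, c, hc, hbc⟩ := Finset.one_lt_card.mp hcompl
  exact ⟨b, c, hbc, Finset.mem_compl.mp hb, Finset.mem_compl.mp hc⟩

private lemma key (n : ℕ) (hn : 6 ≤ n) (x a v : Fin n) (hav : a ≠ v) (hxv : x ≠ v) :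
    ∃ g : Equiv.Perm (Fin n), g ∈ alternatingGroup (Fin n) ∧ g v = v ∧ g x = a := by
  by_cases hxa : x = a
  · exact ⟨1, one_mem _, rfl, hxa ▸ rfl⟩
  · obtain ⟨b, c, hbc, hb, hc⟩ := fresh_two n hn {x, a, v} (by
      refine le_trans (Finset.card_insert_le _ _) ?_
      refine Nat.succ_le_succ (le_trans (Finset.card_insert_le _ _) ?_)
      simp)
    simp only [Finset.mem_insert, Finset.mem_singleton, not_or] at hb hc
    obtain ⟨hbx, hba, hbv⟩ := hb
    obtain ⟨hcx, hca, hcv⟩ := hc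
    refine ⟨Equiv.swap x a * Equiv.swap b c, ?_, ?_, ?_⟩
    · rw [Equiv.Perm.mem_alternatingGroup]
      simp [Equiv.Perm.sign_swap, hxa, hbc]
    · simp [Equiv.Perm.mul_apply,
        Equiv.swap_apply_of_ne_of_ne (Ne.symm hbv) (Ne.symm hcv),
        Equiv.swap_apply_of_ne_of_ne (Ne.symm hxv) (Ne.symm hav)]
    · simp [Equiv.Perm.mul_apply,
        Equiv.swap_apply_of_ne_of_ne (Ne.symm hbx) (Ne.symm hcx)]

theorem even_perm_prod_of_four_point_fixing (n : ℕ) (hn : 6 ≤ n) (u w : Fin n)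
    (huw : u ≠ w) (π : Equiv.Perm (Fin n)) (hπ : π ∈ alternatingGroup (Fin n)) :
    ∃ l : List (Equiv.Perm (Fin n)), l.length ≤ 4 ∧
      (∀ g ∈ l, g ∈ alternatingGroup (Fin n) ∧ (g u = u ∨ g w = w)) ∧
      l.prod = π := by
  -- step: if π₁ u ≠ w we can do it with 2 factors
  have step : ∀ π₁ : Equiv.Perm (Fin n), π₁ ∈ alternatingGroup (Fin n) → π₁ u ≠ w →
      ∃ ρ τ : Equiv.Perm (Fin n), ρ ∈ alternatingGroup (Fin n) ∧
        τ ∈ alternatingGroup (Fin n) ∧ ρ w = w ∧ τ u = u ∧ ρ * τ = π₁ := by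
    intro π₁ hπ₁ h
    obtain ⟨ρ, hρmem, hρw, hρu⟩ := key n hn u (π₁ u) w h huw
    refine ⟨ρ, ρ⁻¹ * π₁, hρmem, mul_mem (inv_mem hρmem) hπ₁, hρw, ?_, by group⟩
    simp [Equiv.Perm.mul_apply, ← hρu]
  by_cases h1 : π u = w
  · -- need a corrective factor σ fixing u with σ⁻¹ w ≠ w
    obtain ⟨d, d', hdd', hd, _⟩ := fresh_two n hn {u, w} (by
      refine le_trans (Finset.card_insert_le _ _) ?_; simp)
    simp only [Finset.mem_insert, Finset.mem_singleton, not_or] at hd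
    obtain ⟨hdu, hdw⟩ := hd
    obtain ⟨σ, hσmem, hσu, hσd⟩ := key n hn d w u (Ne.symm huw) hdu
    have hσinvw : σ⁻¹ w = d := by rw [← hσd]; simp
    have hne : (σ⁻¹ * π) u = d := by simp [Equiv.Perm.mul_apply, h1, hσinvw]
    obtain ⟨ρ, τ, hρmem, hτmem, hρw, hτu, hprod⟩ :=
      step (σ⁻¹ * π) (mul_mem (inv_mem hσmem) hπ) (by rw [hne]; exact hdw)
    refine ⟨[σ, ρ, τ], by simp, ?_, ?_⟩
    · rintro g hg
      simp only [List.mem_cons, List.not_mem_nil, or_false] at hg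
      rcases hg with rfl | rfl | rfl
      · exact ⟨hσmem, Or.inl hσu⟩
      · exact ⟨hρmem, Or.inr hρw⟩
      · exact ⟨hτmem, Or.inl hτu⟩
    · simp only [List.prod_cons, List.prod_nil, mul_one, ← mul_assoc] at *
      rw [mul_assoc σ ρ τ, hprod]; group
  · obtain ⟨ρ, τ, hρmem, hτmem, hρw, hτu, hprod⟩ := step π hπ h1
    refine ⟨[ρ, τ], by simp, ?_, by simpa using hprod⟩
    rintro g hg
    simp only [List.mem_cons, List.not_mem_nil, or_false] at hg
    rcases hg with rfl | rfl
    · exact ⟨hρmem, Or.inr hρw⟩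
    · exact ⟨hτmem, Or.inl hτu⟩
end

section
/- For n ≥ 6, let v, w be distinct elements of {1,...,n} and let τ ∈ S_n with τ(v) ∉ {v, w}. Then there exists β ∈ A_n with β(v) = v, β(w) = w, β(τ(w)) = τ(w) (if τ(w) ∉ {v,w}), and β(τ(v)) ≠ τ(v), such that τ' = τ⁻¹βτ satisfies τ'(w) = w, τ'(v) ≠ v, and τ' ∈ A_n. -/
theorem exists_even_beta_conjugation (n : ℕ) (hn : 6 ≤ n) (v w : Fin n) (hvw : v ≠ w)
    (τ : Equiv.Perm (Fin n)) (hτv : τ v ≠ v) (hτw : τ v ≠ w) :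
    ∃ β : Equiv.Perm (Fin n), β ∈ alternatingGroup (Fin n) ∧
      β v = v ∧ β w = w ∧ (τ w ≠ v → τ w ≠ w → β (τ w) = τ w) ∧ β (τ v) ≠ τ v ∧
      (τ⁻¹ * β * τ) w = w ∧ (τ⁻¹ * β * τ) v ≠ v ∧
      τ⁻¹ * β * τ ∈ alternatingGroup (Fin n) := by
  classical
  set s : Finset (Fin n) := {v, w, τ v, τ w} with hs
  have hcard : s.card ≤ 4 := by
    rw [hs]
    refine le_trans (Finset.card_insert_le _ _) (Nat.succ_le_succ ?_)
    refine le_trans (Finset.card_insert_le _ _) (Nat.succ_le_succ ?_)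
    refine le_trans (Finset.card_insert_le _ _) (Nat.succ_le_succ ?_)
    exact (Finset.card_singleton _).le
  have h2 : 1 < sᶜ.card := by
    rw [Finset.card_compl, Fintype.card_fin]
    omega
  obtain ⟨a, ha, b, hb, hab⟩ := Finset.one_lt_card.mp h2
  simp only [hs, Finset.mem_compl, Finset.mem_insert, Finset.mem_singleton, not_or] at ha hb
  obtain ⟨hav, haw, haτv, haτw⟩ := ha
  obtain ⟨hbv, hbw, hbτv, hbτw⟩ := hb
  have hτwτv : τ w ≠ τ v := fun h => hvw (τ.injective h).symm
  have hβτv : (Equiv.swap (τ v) a * Equiv.swap (τ v) b) (τ v) = b := by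
    rw [Equiv.Perm.mul_apply, Equiv.swap_apply_left,
      Equiv.swap_apply_of_ne_of_ne hbτv hab.symm]
  refine ⟨Equiv.swap (τ v) a * Equiv.swap (τ v) b, ?_, ?_, ?_, ?_, ?_, ?_, ?_, ?_⟩
  · rw [Equiv.Perm.mem_alternatingGroup, map_mul, Equiv.Perm.sign_swap (Ne.symm haτv),
      Equiv.Perm.sign_swap (Ne.symm hbτv)]
    norm_num
  · rw [Equiv.Perm.mul_apply, Equiv.swap_apply_of_ne_of_ne (Ne.symm hτv) (Ne.symm hbv),
      Equiv.swap_apply_of_ne_of_ne (Ne.symm hτv) (Ne.symm hav)]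
  · rw [Equiv.Perm.mul_apply, Equiv.swap_apply_of_ne_of_ne (Ne.symm hτw) (Ne.symm hbw),
      Equiv.swap_apply_of_ne_of_ne (Ne.symm hτw) (Ne.symm haw)]
  · intro _ _
    rw [Equiv.Perm.mul_apply, Equiv.swap_apply_of_ne_of_ne hτwτv (Ne.symm hbτw),
      Equiv.swap_apply_of_ne_of_ne hτwτv (Ne.symm haτw)]
  · rw [hβτv]; exact hbτv
  · simp only [Equiv.Perm.mul_apply]
    rw [Equiv.swap_apply_of_ne_of_ne hτwτv (Ne.symm hbτw),
      Equiv.swap_apply_of_ne_of_ne hτwτv (Ne.symm haτw), Equiv.Perm.inv_def, Equiv.symm_apply_apply]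
  · simp only [Equiv.Perm.mul_apply]
    rw [Equiv.swap_apply_left, Equiv.swap_apply_of_ne_of_ne hbτv hab.symm]
    intro h
    exact hbτv (by simpa using congrArg τ h)
  · rw [Equiv.Perm.mem_alternatingGroup, map_mul, map_mul, map_mul,
      Equiv.Perm.sign_swap (Ne.symm haτv), Equiv.Perm.sign_swap (Ne.symm hbτv), map_inv]
    simp [mul_comm]
end
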